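/- Let f : ℤ → ℕ∞ (natural numbers extended by infinity) be a function such that f⁻¹(0) is finite with cardinality Δ. Then there exists a sequence u : ℕ → ℤ (indexed from 1) such that for every integer n, f(n) equals the number (possibly infinite) of indices k ≥ 1 with u_k = n, and |u_k| ≤ ⌊(k + Δ)/2⌋ for all k ≥ 1. -/

import Mathlib

open Set Function

private noncomputable def phiE (p : ℤ × ℕ) : ℕ :=
  2 * (p.1.natAbs + p.2) ^ 2 + 2 * p.1.natAbs + (if p.1 < 0 then 1 else 0)

private lemma phiE_lt_of_key_lt {p q : ℤ × ℕ} (h : p.1.natAbs + p.2 < q.1.natAbs + q.2) :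
    phiE p < phiE q := by
  unfold phiE
  have h1 : p.1.natAbs ≤ p.1.natAbs + p.2 := Nat.le_add_right _ _
  have h2 : (if p.1 < 0 then (1:ℕ) else 0) ≤ 1 := by split <;> omega
  have h2' : (if q.1 < 0 then (1:ℕ) else 0) ≤ 1 := by split <;> omega
  have h3 : p.1.natAbs + p.2 + 1 ≤ q.1.natAbs + q.2 := h
  have h4 : (p.1.natAbs + p.2 + 1) ^ 2 ≤ (q.1.natAbs + q.2) ^ 2 := Nat.pow_le_pow_left h3 2
  have h5 : (p.1.natAbs + p.2 + 1) ^ 2 = (p.1.natAbs + p.2) ^ 2 + 2 * (p.1.natAbs + p.2) + 1 := by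
    ring
  generalize (p.1.natAbs + p.2) ^ 2 = a at *
  generalize (q.1.natAbs + q.2) ^ 2 = b at *
  omega

private lemma phiE_inj : Function.Injective phiE := by
  rintro ⟨n, i⟩ ⟨m, j⟩ h
  have hkey : n.natAbs + i = m.natAbs + j := by
    rcases Nat.lt_trichotomy ((n, i).1.natAbs + (n, i).2) ((m, j).1.natAbs + (m, j).2) with
      h' | h' | h'
    · exact absurd h (phiE_lt_of_key_lt h').ne
    · exact h'
    · exact absurd h.symm (phiE_lt_of_key_lt h').ne
  unfold phiE at h
  simp only at h hkey
  rw [hkey] at h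
  generalize (m.natAbs + j) ^ 2 = t at h
  have hnm : n = m := by split_ifs at h <;> omega
  have : i = j := by omega
  simp [hnm, this]

private lemma encard_setOf_lt (c : ℕ∞) : {i : ℕ | (i : ℕ∞) < c}.encard = c := by
  cases c with
  | top =>
    have : {i : ℕ | (i : ℕ∞) < ⊤} = Set.univ := by
      ext i; simp [lt_top_iff_ne_top]
    rw [this]
    exact Set.infinite_univ.encard_eq
  | coe m =>
    have : {i : ℕ | (i : ℕ∞) < (m : ℕ∞)} = ↑(Finset.Iio m) := by
      ext i; simp [Nat.cast_lt]
    rw [this, Set.encard_coe_eq_coe_finsetCard, Nat.card_Iio]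

/-- Lemma 1: enumeration of a function `f : ℤ → ℕ∞` with `f⁻¹(0)` finite
of cardinality `Δ` by a sequence `u` (indexed from 1) with
`|u k| ≤ ⌊(k + Δ)/2⌋`. -/
theorem exists_enumeration_seq (f : ℤ → ℕ∞) (hf : (f ⁻¹' {0}).Finite)
    (Δ : ℕ) (hΔ : (f ⁻¹' {0}).ncard = Δ) :
    ∃ u : ℕ → ℤ,
      (∀ n : ℤ, {k : ℕ | 1 ≤ k ∧ u k = n}.encard = f n) ∧
      (∀ k : ℕ, 1 ≤ k → (u k).natAbs ≤ (k + Δ) / 2) := by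
  classical
  set S : Set (ℤ × ℕ) := {q | (q.2 : ℕ∞) < f q.1} with hS_def
  -- S is infinite
  have hS_inf : S.Infinite := by
    have h1 : ((f ⁻¹' {0})ᶜ).Infinite := hf.infinite_compl
    have h2 : (fun n : ℤ => (n, 0)) '' (f ⁻¹' {0})ᶜ ⊆ S := by
      rintro q ⟨n, hn, rfl⟩
      simp only [hS_def, Set.mem_setOf_eq, Nat.cast_zero]
      simpa [pos_iff_ne_zero] using hn
    exact ((h1.image (fun a _ b _ hab => by simpa using hab)).mono h2)
  set p : ℕ → Prop := fun x => x ∈ phiE '' S with hp_def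
  have hp_inf : (setOf p).Infinite := by
    have : setOf p = phiE '' S := rfl
    rw [this]
    exact hS_inf.image phiE_inj.injOn
  set g : ℕ → ℤ × ℕ := fun j => Function.invFun phiE (Nat.nth p j) with hg_def
  have hg : ∀ j : ℕ, g j ∈ S ∧ phiE (g j) = Nat.nth p j := by
    intro j
    have hmem : Nat.nth p j ∈ phiE '' S := Nat.nth_mem_of_infinite hp_inf j
    obtain ⟨q, hqS, hq⟩ := hmem
    have h1 : phiE (Function.invFun phiE (Nat.nth p j)) = Nat.nth p j :=
      Function.invFun_eq ⟨q, hq⟩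
    have h2 : g j = q := phiE_inj (by rw [hg_def]; rw [h1, hq])
    exact ⟨h2 ▸ hqS, h1⟩
  have hg_inj : Function.Injective g := by
    intro a b hab
    have : Nat.nth p a = Nat.nth p b := by
      rw [← (hg a).2, ← (hg b).2, hab]
    exact Nat.nth_injective hp_inf this
  refine ⟨fun k => (g (k - 1)).1, ?_, ?_⟩
  · intro n
    have hset : {k : ℕ | 1 ≤ k ∧ (g (k - 1)).1 = n} = (fun j => j + 1) '' {j | (g j).1 = n} := by
      ext k
      simp only [Set.mem_setOf_eq, Set.mem_image]
      constructor
      · rintro ⟨hk, hu⟩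
        exact ⟨k - 1, hu, by omega⟩
      · rintro ⟨j, hj, rfl⟩
        exact ⟨by omega, by simpa using hj⟩
    rw [hset, (add_left_injective 1).encard_image]
    have h2 : {j | (g j).1 = n}.encard = (g '' {j | (g j).1 = n}).encard :=
      (hg_inj.encard_image _).symm
    have h3 : g '' {j | (g j).1 = n} = {q ∈ S | q.1 = n} := by
      ext q
      constructor
      · rintro ⟨j, hj, rfl⟩
        exact ⟨(hg j).1, hj⟩
      · rintro ⟨hqS, hq1⟩
        have : phiE q ∈ setOf p := Set.mem_image_of_mem _ hqS
        obtain ⟨j, hj⟩ := Nat.subset_range_nth this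
        refine ⟨j, ?_, ?_⟩
        · have : g j = q := phiE_inj (by rw [(hg j).2, hj])
          simp [Set.mem_setOf_eq, this, hq1]
        · exact phiE_inj (by rw [(hg j).2, hj])
    have h4 : {q ∈ S | q.1 = n} = (fun i : ℕ => (n, i)) '' {i : ℕ | (i : ℕ∞) < f n} := by
      ext ⟨a, b⟩
      simp only [Set.mem_setOf_eq, Set.mem_image, hS_def, Set.mem_sep_iff]
      constructor
      · rintro ⟨hab, rfl⟩
        exact ⟨b, hab, rfl⟩
      · rintro ⟨i, hi, heq⟩
        obtain ⟨rfl, rfl⟩ := Prod.mk.injEq .. ▸ heq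
        simp only [Prod.mk.injEq] at heq
        exact ⟨by simpa using hi, rfl⟩
    rw [h2, h3, h4,
      Function.Injective.encard_image (fun a b hab => by simpa using hab),
      encard_setOf_lt]
  · intro k hk
    rw [Nat.le_div_iff_mul_le (by norm_num : 0 < 2)]
    show (g (k - 1)).1.natAbs * 2 ≤ k + Δ
    set q := g (k - 1) with hq_def
    set K : ℕ := q.1.natAbs + q.2 with hK_def
    rcases Nat.eq_zero_or_pos K with hK0 | hKpos
    · have : q.1.natAbs = 0 := by omega
      omega
    -- counting
    have hcount : Nat.count p (Nat.nth p (k - 1)) = k - 1 :=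
      Nat.count_nth_of_infinite hp_inf _
    set C : Finset ℕ := (Finset.range (Nat.nth p (k - 1))).filter p with hC_def
    have hCcard : C.card = k - 1 := by
      rw [hC_def, ← Nat.count_eq_card_filter_range, hcount]
    set Z : Finset ℤ := hf.toFinset with hZ_def
    have hZcard : Z.card = Δ := by
      rw [hZ_def, ← Set.ncard_eq_toFinset_card _ hf, hΔ]
    set W : Finset ℤ := Finset.Ioo (-(K : ℤ)) (K : ℤ) with hW_def
    have hWcard : W.card = 2 * K - 1 := by
      rw [hW_def, Int.card_Ioo]
      omega
    have hBle : (W \ Z).card ≤ k - 1 := by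
      rw [← hCcard]
      apply Finset.card_le_card_of_injOn (fun n' => phiE (n', 0))
      · intro n' hn'
        rw [Finset.mem_coe, Finset.mem_sdiff] at hn'
        obtain ⟨hW', hZ'⟩ := hn'
        rw [hW_def, Finset.mem_Ioo] at hW'
        have hfn' : f n' ≠ 0 := by
          rw [hZ_def, Set.Finite.mem_toFinset] at hZ'
          simpa using hZ'
        have hmemS : (n', 0) ∈ S := by
          simp only [hS_def, Set.mem_setOf_eq, Nat.cast_zero]
          exact pos_iff_ne_zero.mpr hfn'
        have hkeylt : (n', 0).1.natAbs + (n', 0).2 < q.1.natAbs + q.2 := by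
          simp only
          omega
        have hlt : phiE (n', 0) < Nat.nth p (k - 1) := by
          rw [← (hg (k - 1)).2]
          exact phiE_lt_of_key_lt hkeylt
        rw [Finset.mem_coe, hC_def, Finset.mem_filter, Finset.mem_range]
        exact ⟨hlt, Set.mem_image_of_mem _ hmemS⟩
      · intro a _ b _ hab
        have := phiE_inj hab
        simpa using this
    have hBge : 2 * K - 1 - Δ ≤ (W \ Z).card := by
      calc 2 * K - 1 - Δ = W.card - Z.card := by rw [hWcard, hZcard]
        _ ≤ (W \ Z).card := Finset.le_card_sdiff _ _
    have : q.1.natAbs ≤ K := by omega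
    omega
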